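/- Let G be a finite group and n a positive integer. Suppose that for every h ∈ G whose order does not lie in {1, 2, 3, 4, 6}, the centralizer C(h) satisfies: for all commuting u, g ∈ C(h) and all m with gcd(m, |C(h)|) = 1, the number of a ∈ C(h) with (a·u⁻¹)ⁿ = aⁿ = g equals the number with (a·u⁻¹)ⁿ = aⁿ = gᵐ. Then G itself satisfies the same property: for all commuting u, g ∈ G and all m with gcd(m, |G|) = 1, |G_n(u, g)| = |G_n(u, gᵐ)|. -/

import Mathlib

lemma aux_gcd_emod_16 (a b : ℤ) : Int.gcd (a % b) b = Int.gcd a b := by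
  apply Nat.dvd_antisymm
  · refine Int.natCast_dvd_natCast.mp (Int.dvd_coe_gcd ?_ (Int.gcd_dvd_right ..))
    have h := Int.emod_add_mul_ediv a b
    calc (Int.gcd (a % b) b : ℤ) ∣ a % b + b * (a / b) :=
          dvd_add (Int.gcd_dvd_left ..) (Dvd.dvd.mul_right (Int.gcd_dvd_right ..) _)
      _ = a := h
  · refine Int.natCast_dvd_natCast.mp (Int.dvd_coe_gcd ?_ (Int.gcd_dvd_right ..))
    rw [Int.emod_def]
    exact dvd_sub (Int.gcd_dvd_left ..) (Dvd.dvd.mul_right (Int.gcd_dvd_right ..) _)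

/-- Bijection `a ↦ u * a⁻¹` shows `|G_n(u,g)| = |G_n(u,g⁻¹)|`. -/
lemma aux_inv_16 {G : Type*} [Group G] (n : ℕ) (u g : G) (hug : u * g = g * u) :
    Nat.card {a : G | (a * u⁻¹) ^ n = a ^ n ∧ a ^ n = g} =
      Nat.card {a : G | (a * u⁻¹) ^ n = a ^ n ∧ a ^ n = g⁻¹} := by
  have hcug : Commute u g := hug
  have fwd : ∀ a : G, (a * u⁻¹) ^ n = a ^ n ∧ a ^ n = g →
      (u * a⁻¹ * u⁻¹) ^ n = (u * a⁻¹) ^ n ∧ (u * a⁻¹) ^ n = g⁻¹ := by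
    intro a ⟨h1, h2⟩
    have e1 : (u * a⁻¹) ^ n = g⁻¹ := by
      have h : u * a⁻¹ = (a * u⁻¹)⁻¹ := by group
      rw [h, inv_pow, h1, h2]
    refine ⟨?_, e1⟩
    have h : (u * a⁻¹ * u⁻¹) ^ n = u * (a⁻¹) ^ n * u⁻¹ := conj_pow
    rw [h, inv_pow, h2, e1, hcug.inv_right.eq]
    group
  have bwd : ∀ b : G, (b * u⁻¹) ^ n = b ^ n ∧ b ^ n = g⁻¹ →
      (b⁻¹ * u * u⁻¹) ^ n = (b⁻¹ * u) ^ n ∧ (b⁻¹ * u) ^ n = g := by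
    intro b ⟨h1, h2⟩
    have e1 : (b⁻¹ * u) ^ n = g := by
      have h : b⁻¹ * u = (u⁻¹ * (b * u⁻¹) * u⁻¹⁻¹)⁻¹ := by group
      rw [h, inv_pow, conj_pow, h1, h2, (hcug.inv_left.inv_right).eq]
      group
    refine ⟨?_, e1⟩
    have h : b⁻¹ * u * u⁻¹ = b⁻¹ := by group
    rw [h, inv_pow, h2, e1, inv_inv]
  apply Nat.card_congr
  refine ⟨fun a => ⟨u * a.1⁻¹, fwd a.1 a.2⟩,
    fun b => ⟨b.1⁻¹ * u, bwd b.1 b.2⟩, fun a => ?_, fun b => ?_⟩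
  · ext; simp
  · ext; simp

theorem stmt_16 {G : Type*} [Group G] [Finite G] (n : ℕ) (hn : 0 < n)
    (hyp : ∀ h : G, orderOf h ∉ ({1, 2, 3, 4, 6} : Set ℕ) →
      ∀ u g : Subgroup.centralizer ({h} : Set G), u * g = g * u →
        ∀ m : ℤ, Int.gcd m (Nat.card (Subgroup.centralizer ({h} : Set G))) = 1 →
          Nat.card {a : Subgroup.centralizer ({h} : Set G) |
              (a * u⁻¹) ^ n = a ^ n ∧ a ^ n = g} =
            Nat.card {a : Subgroup.centralizer ({h} : Set G) |
              (a * u⁻¹) ^ n = a ^ n ∧ a ^ n = g ^ m}) :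
    ∀ u g : G, u * g = g * u → ∀ m : ℤ, Int.gcd m (Nat.card G) = 1 →
      Nat.card {a : G | (a * u⁻¹) ^ n = a ^ n ∧ a ^ n = g} =
        Nat.card {a : G | (a * u⁻¹) ^ n = a ^ n ∧ a ^ n = g ^ m} := by
  intro u g hug m hm
  have hmc : Nat.Coprime m.natAbs (Nat.card G) := by
    simpa [Int.gcd] using hm
  have hdvd : orderOf g ∣ Nat.card G := orderOf_dvd_natCard g
  have hcopd : Nat.Coprime m.natAbs (orderOf g) :=
    Nat.Coprime.coprime_dvd_right hdvd hmc
  have hcopd' : Int.gcd m (orderOf g) = 1 := by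
    simpa [Int.gcd] using hcopd
  by_cases hdg : orderOf g ∈ ({1, 2, 3, 4, 6} : Set ℕ)
  · -- small order case: g ^ m ∈ {g, g⁻¹}
    have hdpos : 0 < orderOf g := (isOfFinOrder_of_finite g).orderOf_pos
    set d : ℕ := orderOf g with hd
    have hr0 : 0 ≤ m % (d : ℤ) := Int.emod_nonneg m (by exact_mod_cast hdpos.ne')
    have hrlt : m % (d : ℤ) < d := Int.emod_lt_of_pos m (by exact_mod_cast hdpos)
    set k : ℕ := (m % (d : ℤ)).toNat with hk
    have hgm_eq : g ^ m = g ^ k := by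
      rw [← zpow_mod_orderOf g m, ← hd, ← zpow_natCast, hk, Int.toNat_of_nonneg hr0]
    have hklt : k < d := by omega
    have hkco : Nat.Coprime k d := by
      have h1 : Int.gcd (m % (d : ℤ)) d = 1 := by
        rw [aux_gcd_emod_16]; exact hcopd'
      have h2 : ((k : ℤ)) = m % (d : ℤ) := Int.toNat_of_nonneg hr0
      rw [← h2] at h1
      simpa [Int.gcd] using h1
    have hsmall : g ^ m = g ∨ g ^ m = g⁻¹ := by
      have hpow : g ^ d = 1 := by rw [hd]; exact pow_orderOf_eq_one g
      simp only [Set.mem_insert_iff, Set.mem_singleton_iff] at hdg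
      rcases hdg with h | h | h | h | h <;> rw [h] at hklt hkco hpow
      · left
        have hg1 : g = 1 := orderOf_eq_one_iff.mp (by rw [← hd, h])
        simp [hgm_eq, hg1]
      · interval_cases k
        · exact absurd hkco (by decide)
        · left; simpa using hgm_eq
      · interval_cases k
        · exact absurd hkco (by decide)
        · left; simpa using hgm_eq
        · right; rw [hgm_eq]
          exact eq_inv_of_mul_eq_one_left (by rw [← pow_succ]; exact hpow)
      · interval_cases k
        · exact absurd hkco (by decide)
        · left; simpa using hgm_eq
        · exact absurd hkco (by decide)
        · right; rw [hgm_eq]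
          exact eq_inv_of_mul_eq_one_left (by rw [← pow_succ]; exact hpow)
      · interval_cases k
        · exact absurd hkco (by decide)
        · left; simpa using hgm_eq
        · exact absurd hkco (by decide)
        · exact absurd hkco (by decide)
        · exact absurd hkco (by decide)
        · right; rw [hgm_eq]
          exact eq_inv_of_mul_eq_one_left (by rw [← pow_succ]; exact hpow)
    rcases hsmall with h | h
    · rw [h]
    · rw [h]; exact aux_inv_16 n u g hug
  · -- large order case: use centralizer hypothesis
    set H := Subgroup.centralizer ({g} : Set G) with hH
    have hu : u ∈ H := Subgroup.mem_centralizer_iff.mpr (by simpa using hug.symm)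
    have hg : g ∈ H := Subgroup.mem_centralizer_iff.mpr (by simp)
    have hgm : g ^ m ∈ H := H.zpow_mem hg m
    have hcH : Int.gcd m (Nat.card H) = 1 := by
      have : Nat.Coprime m.natAbs (Nat.card H) :=
        Nat.Coprime.coprime_dvd_right (Subgroup.card_subgroup_dvd_card H) hmc
      simpa [Int.gcd] using this
    have hcomm : (⟨u, hu⟩ : H) * ⟨g, hg⟩ = ⟨g, hg⟩ * ⟨u, hu⟩ := Subtype.ext hug
    have key := hyp g hdg ⟨u, hu⟩ ⟨g, hg⟩ hcomm m hcH
    have hgpow : (⟨g, hg⟩ : H) ^ m = ⟨g ^ m, hgm⟩ := by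
      apply Subtype.ext; push_cast; rfl
    rw [hgpow] at key
    have trans : ∀ (w : G) (hw : w ∈ H), (∀ a : G, a ^ n = w → a ∈ H) →
        Nat.card {a : G | (a * u⁻¹) ^ n = a ^ n ∧ a ^ n = w} =
          Nat.card {a : H | (a * (⟨u, hu⟩ : H)⁻¹) ^ n = a ^ n ∧ a ^ n = ⟨w, hw⟩} := by
      intro w hw hmem
      apply Nat.card_congr
      refine ⟨fun a => ⟨⟨a.1, hmem a.1 a.2.2⟩, ?_⟩, fun b => ⟨b.1.1, ?_⟩,
        fun a => rfl, fun b => rfl⟩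
      · obtain ⟨h1, h2⟩ := a.2
        constructor
        · apply Subtype.ext; push_cast; exact h1
        · apply Subtype.ext; push_cast; exact h2
      · obtain ⟨h1, h2⟩ := b.2
        constructor
        · have := congrArg Subtype.val h1; push_cast at this; exact this
        · have := congrArg Subtype.val h2; push_cast at this; exact this
    have mem1 : ∀ a : G, a ^ n = g → a ∈ H := by
      intro a ha
      refine Subgroup.mem_centralizer_iff.mpr ?_
      intro z hz; rw [Set.mem_singleton_iff] at hz; subst hz
      exact (ha ▸ Commute.pow_self a n).eq
    have memm : ∀ a : G, a ^ n = g ^ m → a ∈ H := by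
      intro a ha
      obtain ⟨x, y, hxy⟩ := Int.isCoprime_iff_gcd_eq_one.mpr hcopd'
      have hgd : g ^ (orderOf g : ℤ) = 1 := by
        rw [zpow_natCast]; exact pow_orderOf_eq_one g
      have hxy' : m * x + (orderOf g : ℤ) * y = 1 := by linear_combination hxy
      have hgg : (g ^ m) ^ x * (g ^ (orderOf g : ℤ)) ^ y = g := by
        rw [← zpow_mul, ← zpow_mul, ← zpow_add, hxy', zpow_one]
      have hcm : Commute a (g ^ m) := (ha ▸ Commute.pow_self a n).symm
      have h2 : Commute a ((g ^ (orderOf g : ℤ)) ^ y) := by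
        rw [hgd]; simpa using Commute.one_right a
      have hfin : Commute a g := by
        have := (hcm.zpow_right x).mul_right h2
        rwa [hgg] at this
      refine Subgroup.mem_centralizer_iff.mpr ?_
      intro z hz; rw [Set.mem_singleton_iff] at hz; subst hz
      exact hfin.symm.eq
    rw [trans g hg mem1, trans (g ^ m) hgm memm]
    exact key
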